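/- Let G be a finite abelian group and let W ⊆ ℤ be a nonempty set of weights that is multiplicatively closed modulo exp(G) and with e_W(G) = 2. Then D_{W,m+1}(G) = D_{W,m}(G) + 2 for every m ≥ |G|. -/

import Mathlib

open scoped BigOperators

/-- `l` encodes a `W`-weighted zero-subsum of the sequence (multiset) `S`:
a nonempty list of (weight, group element) pairs with weights in `W`, whose
group elements form a sub-multiset of `S` and whose weighted sum is zero. -/
def IsWZeroSubsum {G : Type*} [AddCommGroup G] (W : Set ℤ) (S : Multiset G)
    (l : List (ℤ × G)) : Prop :=
  l ≠ [] ∧ (∀ p ∈ l, p.1 ∈ W) ∧ (↑(l.map Prod.snd) : Multiset G) ≤ S ∧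
    (l.map fun p => p.1 • p.2).sum = 0

/-- `S` has a `W`-weighted zero-subsum whose length lies in `L`. -/
def HasWZeroSubsumLen {G : Type*} [AddCommGroup G] (W : Set ℤ) (S : Multiset G)
    (L : Set ℕ) : Prop :=
  ∃ l : List (ℤ × G), IsWZeroSubsum W S l ∧ l.length ∈ L

/-- `S` has `m` pairwise disjoint `W`-weighted zero-subsums. -/
def HasDisjointWZeroSubsums {G : Type*} [AddCommGroup G] (W : Set ℤ) (S : Multiset G)
    (m : ℕ) : Prop :=
  ∃ ls : List (List (ℤ × G)), ls.length = m ∧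
    (∀ l ∈ ls, l ≠ [] ∧ (∀ p ∈ l, p.1 ∈ W) ∧ (l.map fun p => p.1 • p.2).sum = 0) ∧
    (↑(ls.flatten.map Prod.snd) : Multiset G) ≤ S

/-- The `m`-wise `W`-weighted Davenport constant `D_{W,m}(G)`. -/
noncomputable def DW (W : Set ℤ) (G : Type*) [AddCommGroup G] (m : ℕ) : ℕ :=
  sInf {n : ℕ | ∀ S : Multiset G, n ≤ Multiset.card S → HasDisjointWZeroSubsums W S m}

/-- The `L`-constrained `W`-weighted Davenport constant `s_{W,L}(G)`, valued in `ℕ∞`. -/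
noncomputable def sWL (W : Set ℤ) (G : Type*) [AddCommGroup G] (L : Set ℕ) : ℕ∞ :=
  sInf {N : ℕ∞ | ∃ n : ℕ, N = (n : ℕ∞) ∧
    ∀ S : Multiset G, n ≤ Multiset.card S → HasWZeroSubsumLen W S L}

/-- The `d`-constrained `W`-weighted Davenport constant `s_{W,≤d}(G)`. -/
noncomputable def sWle (W : Set ℤ) (G : Type*) [AddCommGroup G] (d : ℕ) : ℕ∞ :=
  sWL W G {t | 1 ≤ t ∧ t ≤ d}

/-- `e_W(G)`: the smallest `t ≥ 1` such that some `t` weights from `W` sum to a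
multiple of `exp(G)`. -/
noncomputable def eW (W : Set ℤ) (G : Type*) [AddCommGroup G] : ℕ :=
  sInf {t : ℕ | 1 ≤ t ∧ ∃ w : Fin t → ℤ, (∀ i, w i ∈ W) ∧
    ((AddMonoid.exponent G : ℤ) ∣ ∑ i, w i)}

/-- `W` is multiplicatively closed modulo `n`. -/
def MulClosedMod (W : Set ℤ) (n : ℕ) : Prop :=
  ∀ w ∈ W, ∀ w' ∈ W, ∃ u ∈ W, (n : ℤ) ∣ w * w' - u


namespace Stmt11Aux

open scoped Classical

variable {G : Type*} [AddCommGroup G]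

lemma exp_zsmul (x : G) : (AddMonoid.exponent G : ℤ) • x = 0 := by
  rw [natCast_zsmul]
  exact AddMonoid.exponent_nsmul_eq_zero x

lemma dvd_zsmul_eq_zero {c : ℤ} (h : (AddMonoid.exponent G : ℤ) ∣ c) (x : G) : c • x = 0 := by
  obtain ⟨k, rfl⟩ := h
  rw [mul_smul, exp_zsmul]

lemma smul_congr {c u : ℤ} (h : (AddMonoid.exponent G : ℤ) ∣ c - u) (x : G) : c • x = u • x := by
  have h0 := dvd_zsmul_eq_zero h x
  rw [sub_smul, sub_eq_zero] at h0
  exact h0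

noncomputable def rho {n : ℕ} (W : Set ℤ) (hmul : MulClosedMod W n) (v a : ℤ) : ℤ :=
  if h : v ∈ W ∧ a ∈ W then (hmul v h.1 a h.2).choose else a

lemma rho_spec {n : ℕ} (W : Set ℤ) (hmul : MulClosedMod W n) {v a : ℤ}
    (hv : v ∈ W) (ha : a ∈ W) :
    rho W hmul v a ∈ W ∧ (n : ℤ) ∣ v * a - rho W hmul v a := by
  rw [rho, dif_pos ⟨hv, ha⟩]
  exact (hmul v hv a ha).choose_spec

lemma scl_sum (W : Set ℤ) (hmul : MulClosedMod W (AddMonoid.exponent G)) {v : ℤ} (hv : v ∈ W)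
    (A : List (ℤ × G)) (hA : ∀ p ∈ A, p.1 ∈ W) :
    ((A.map fun p => (rho W hmul v p.1, p.2)).map fun p => p.1 • p.2).sum
      = v • (A.map fun p => p.1 • p.2).sum := by
  induction A with
  | nil => simp
  | cons p A ih =>
    have hp : p.1 ∈ W := hA p List.mem_cons_self
    have hspec := rho_spec W hmul hv hp
    simp only [List.map_cons, List.sum_cons]
    rw [ih (fun q hq => hA q (List.mem_cons_of_mem _ hq)), smul_add, ← mul_smul]
    congr 1
    exact (smul_congr hspec.2 p.2).symm


lemma exists_perm_cons {α : Type*} {p : α} {l : List α} (h : p ∈ l) :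
    ∃ A, List.Perm l (p :: A) := by
  classical
  exact ⟨l.erase p, List.perm_cons_erase h⟩

lemma merge [Fintype G] {W : Set ℤ} (hmul : MulClosedMod W (AddMonoid.exponent G))
    {w1 w2 : ℤ} (hw1 : w1 ∈ W) (hw2 : w2 ∈ W)
    (hsum : (AddMonoid.exponent G : ℤ) ∣ w1 + w2)
    (hno : ∀ w ∈ W, ¬ (AddMonoid.exponent G : ℤ) ∣ w)
    {g : G} (hg : addOrderOf g = AddMonoid.exponent G)
    {l l' : List (ℤ × G)}
    (hlW : ∀ p ∈ l, p.1 ∈ W) (hlS : (l.map fun p => p.1 • p.2).sum = 0)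
    (hl'W : ∀ p ∈ l', p.1 ∈ W) (hl'S : (l'.map fun p => p.1 • p.2).sum = 0)
    (hgl : g ∈ l.map Prod.snd) (hgl' : g ∈ l'.map Prod.snd) :
    ∃ C : List (ℤ × G), C ≠ [] ∧ (∀ p ∈ C, p.1 ∈ W) ∧ (C.map fun p => p.1 • p.2).sum = 0 ∧
      (↑(C.map Prod.snd) : Multiset G) + (g ::ₘ {g})
        = ↑(l.map Prod.snd) + ↑(l'.map Prod.snd) := by
  obtain ⟨p, hpmem, hpg⟩ := List.mem_map.mp hgl
  obtain ⟨q, hpmem', hpg'⟩ := List.mem_map.mp hgl'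
  have hpe : p = (p.1, g) := by rw [← hpg]
  have hqe : q = (q.1, g) := by rw [← hpg']
  rw [hpe] at hpmem
  rw [hqe] at hpmem'
  set w := p.1 with hwdef
  set w' := q.1 with hw'def
  have hw : w ∈ W := hlW (w, g) hpmem
  have hw' : w' ∈ W := hl'W (w', g) hpmem'
  obtain ⟨A, permA⟩ := exists_perm_cons hpmem
  obtain ⟨B, permB⟩ := exists_perm_cons hpmem'
  have hAW : ∀ r ∈ A, r.1 ∈ W := fun r hr =>
    hlW r (permA.symm.subset (List.mem_cons_of_mem _ hr))
  have hBW : ∀ r ∈ B, r.1 ∈ W := fun r hr =>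
    hl'W r (permB.symm.subset (List.mem_cons_of_mem _ hr))
  have hsumA : w • g + (A.map fun r => r.1 • r.2).sum = 0 := by
    have := (permA.map fun r => r.1 • r.2).sum_eq
    rw [hlS] at this
    simpa using this.symm
  have hsumB : w' • g + (B.map fun r => r.1 • r.2).sum = 0 := by
    have := (permB.map fun r => r.1 • r.2).sum_eq
    rw [hl'S] at this
    simpa using this.symm
  have hAne : A ≠ [] := by
    intro hA0
    rw [hA0] at hsumA
    simp only [List.map_nil, List.sum_nil, add_zero] at hsumA
    exact hno w hw (hg ▸ addOrderOf_dvd_iff_zsmul_eq_zero.mpr hsumA)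
  obtain ⟨v1, hv1W, hv1d⟩ := hmul w1 hw1 w' hw'
  obtain ⟨v2, hv2W, hv2d⟩ := hmul w2 hw2 w hw
  refine ⟨(A.map fun r => (rho W hmul v1 r.1, r.2)) ++
      (B.map fun r => (rho W hmul v2 r.1, r.2)), ?_, ?_, ?_, ?_⟩
  · simp [hAne]
  · intro r hr
    rcases List.mem_append.mp hr with h | h
    · obtain ⟨s, hs, rfl⟩ := List.mem_map.mp h
      exact (rho_spec W hmul hv1W (hAW s hs)).1
    · obtain ⟨s, hs, rfl⟩ := List.mem_map.mp h
      exact (rho_spec W hmul hv2W (hBW s hs)).1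
  · rw [List.map_append, List.sum_append,
      scl_sum W hmul hv1W A hAW, scl_sum W hmul hv2W B hBW]
    have hA' : (A.map fun r => r.1 • r.2).sum = -(w • g) := by
      rw [eq_neg_iff_add_eq_zero, add_comm]; exact hsumA
    have hB' : (B.map fun r => r.1 • r.2).sum = -(w' • g) := by
      rw [eq_neg_iff_add_eq_zero, add_comm]; exact hsumB
    rw [hA', hB', smul_neg, smul_neg, smul_smul, smul_smul]
    have hdvd : (AddMonoid.exponent G : ℤ) ∣ v1 * w + v2 * w' := by
      obtain ⟨k1, hk1⟩ := hv1d
      obtain ⟨k2, hk2⟩ := hv2d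
      obtain ⟨k3, hk3⟩ := hsum
      exact ⟨k3 * w' * w - k1 * w - k2 * w', by linear_combination (-w) * hk1 +
        (-w') * hk2 + (w' * w) * hk3⟩
    have hz : (v1 * w) • g + (v2 * w') • g = 0 := by
      rw [← add_smul]; exact dvd_zsmul_eq_zero hdvd g
    rw [← neg_add, hz, neg_zero]
  · have hAeq : (↑(l.map Prod.snd) : Multiset G) = g ::ₘ ↑(A.map Prod.snd) := by
      have h : List.Perm (l.map Prod.snd) (g :: A.map Prod.snd) := by
        simpa using permA.map Prod.snd
      rw [Multiset.cons_coe]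
      exact Multiset.coe_eq_coe.mpr h
    have hBeq : (↑(l'.map Prod.snd) : Multiset G) = g ::ₘ ↑(B.map Prod.snd) := by
      have h : List.Perm (l'.map Prod.snd) (g :: B.map Prod.snd) := by
        simpa using permB.map Prod.snd
      rw [Multiset.cons_coe]
      exact Multiset.coe_eq_coe.mpr h
    have h1 : ((A.map fun r => (rho W hmul v1 r.1, r.2)) ++
        (B.map fun r => (rho W hmul v2 r.1, r.2))).map Prod.snd
          = A.map Prod.snd ++ B.map Prod.snd := by
      simp [List.map_map, Function.comp_def]
    rw [h1, hAeq, hBeq, ← Multiset.coe_add]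
    simp only [← Multiset.singleton_add]
    abel

lemma key [Fintype G] {W : Set ℤ} (hmul : MulClosedMod W (AddMonoid.exponent G))
    {w1 w2 : ℤ} (hw1 : w1 ∈ W) (hw2 : w2 ∈ W)
    (hsum : (AddMonoid.exponent G : ℤ) ∣ w1 + w2)
    (hno : ∀ w ∈ W, ¬ (AddMonoid.exponent G : ℤ) ∣ w)
    {g : G} (hg : addOrderOf g = AddMonoid.exponent G)
    {T : Multiset G} {m : ℕ}
    (hT : ¬ HasDisjointWZeroSubsums W T m) :
    ¬ HasDisjointWZeroSubsums W (g ::ₘ g ::ₘ T) (m + 1) := by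
  rintro ⟨ls, hlen, hval, hle⟩
  apply hT
  classical
  have hcount : ∀ x, (↑(ls.flatten.map Prod.snd) : Multiset G).count x
      ≤ T.count x + (if x = g then 2 else 0) := by
    intro x
    have h := Multiset.count_le_of_le x hle
    rw [Multiset.count_cons, Multiset.count_cons] at h
    split_ifs at h ⊢ with hx <;> omega
  by_cases h1 : (↑(ls.flatten.map Prod.snd) : Multiset G).count g ≤ T.count g
  · have hM : (↑(ls.flatten.map Prod.snd) : Multiset G) ≤ T := by
      rw [Multiset.le_iff_count]
      intro x
      have := hcount x
      by_cases hx : x = g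
      · subst hx; exact h1
      · simpa [hx] using this
    cases ls with
    | nil => simp at hlen
    | cons hd tl =>
      refine ⟨tl, by simpa using hlen, fun l hl => hval l (List.mem_cons_of_mem _ hl), ?_⟩
      refine le_trans ?_ hM
      rw [List.flatten_cons, List.map_append, ← Multiset.coe_add]
      exact le_add_self
  · push_neg at h1
    have hgmem : ∃ l ∈ ls, g ∈ l.map Prod.snd := by
      have hpos : 0 < (↑(ls.flatten.map Prod.snd) : Multiset G).count g := by omega
      rw [Multiset.count_pos, Multiset.mem_coe, List.mem_map] at hpos
      obtain ⟨r, hr, hrg⟩ := hpos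
      obtain ⟨l, hl, hrl⟩ := List.mem_flatten.mp hr
      exact ⟨l, hl, List.mem_map.mpr ⟨r, hrl, hrg⟩⟩
    obtain ⟨l, hls, hgl⟩ := hgmem
    obtain ⟨ls1, perm1⟩ := exists_perm_cons hls
    have hM : (↑(ls.flatten.map Prod.snd) : Multiset G)
        = ↑(l.map Prod.snd) + ↑(ls1.flatten.map Prod.snd) := by
      have h := Multiset.coe_eq_coe.mpr ((perm1.flatten).map Prod.snd)
      rw [h, List.flatten_cons, List.map_append, ← Multiset.coe_add]
    have hlen1 : ls1.length = m := by
      have := perm1.length_eq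
      simp only [List.length_cons] at this
      omega
    have hmem1 : ∀ l' ∈ ls1, l' ∈ ls := fun l' h =>
      perm1.symm.subset (List.mem_cons_of_mem _ h)
    by_cases h2 : (↑(ls1.flatten.map Prod.snd) : Multiset G).count g ≤ T.count g
    · refine ⟨ls1, hlen1, fun l' hl' => hval l' (hmem1 l' hl'), ?_⟩
      rw [Multiset.le_iff_count]
      intro x
      by_cases hx : x = g
      · subst hx; exact h2
      · have hc := hcount x
        rw [hM] at hc
        simp only [hx, if_false, Multiset.count_add] at hc
        omega
    · push_neg at h2
      have hgmem' : ∃ l' ∈ ls1, g ∈ l'.map Prod.snd := by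
        have hpos : 0 < (↑(ls1.flatten.map Prod.snd) : Multiset G).count g := by omega
        rw [Multiset.count_pos, Multiset.mem_coe, List.mem_map] at hpos
        obtain ⟨r, hr, hrg⟩ := hpos
        obtain ⟨l', hl', hrl⟩ := List.mem_flatten.mp hr
        exact ⟨l', hl', List.mem_map.mpr ⟨r, hrl, hrg⟩⟩
      obtain ⟨l', hls', hgl'⟩ := hgmem'
      obtain ⟨ls2, perm2⟩ := exists_perm_cons hls'
      have hM1 : (↑(ls1.flatten.map Prod.snd) : Multiset G)
          = ↑(l'.map Prod.snd) + ↑(ls2.flatten.map Prod.snd) := by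
        have h := Multiset.coe_eq_coe.mpr ((perm2.flatten).map Prod.snd)
        rw [h, List.flatten_cons, List.map_append, ← Multiset.coe_add]
      have hlen2 : ls2.length + 1 = m := by
        have := perm2.length_eq
        simp only [List.length_cons] at this
        omega
      obtain ⟨hlne, hlWmem, hlSum⟩ := hval l hls
      obtain ⟨hl'ne, hl'Wmem, hl'Sum⟩ := hval l' (hmem1 l' hls')
      obtain ⟨C, hCne, hCW, hCS, hCsnd⟩ := merge hmul hw1 hw2 hsum hno hg
        hlWmem hlSum hl'Wmem hl'Sum hgl hgl'
      refine ⟨C :: ls2, by simp [hlen2], ?_, ?_⟩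
      · intro l0 hl0
        rcases List.mem_cons.mp hl0 with rfl | h
        · exact ⟨hCne, hCW, hCS⟩
        · exact hval l0 (hmem1 l0 (perm2.symm.subset (List.mem_cons_of_mem _ h)))
      · rw [Multiset.le_iff_count]
        intro x
        have hc := hcount x
        rw [hM, hM1] at hc
        have hsplit : (↑((C :: ls2).flatten.map Prod.snd) : Multiset G)
            = ↑(C.map Prod.snd) + ↑(ls2.flatten.map Prod.snd) := by
          rw [List.flatten_cons, List.map_append, ← Multiset.coe_add]
        rw [hsplit]
        have hcc := congrArg (Multiset.count x) hCsnd
        simp only [Multiset.count_add, Multiset.count_cons, Multiset.count_singleton] at hcc hc ⊢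
        by_cases hx : x = g <;> simp only [hx, if_true, if_false] at hcc hc ⊢ <;> omega

lemma pair_le {g : G} {S : Multiset G} (hgc : 2 ≤ S.count g) :
    (g ::ₘ ({g} : Multiset G)) ≤ S := by
  classical
  rw [Multiset.le_iff_count]
  intro x
  by_cases hx : x = g
  · subst hx
    simpa [Multiset.count_cons, Multiset.count_singleton] using hgc
  · simp [Multiset.count_cons, Multiset.count_singleton, hx]

lemma mono {W : Set ℤ} {T T' : Multiset G} {m : ℕ} (h : HasDisjointWZeroSubsums W T m)
    (hle : T ≤ T') : HasDisjointWZeroSubsums W T' m := by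
  obtain ⟨ls, h1, h2, h3⟩ := h
  exact ⟨ls, h1, h2, le_trans h3 hle⟩

lemma extract {W : Set ℤ} {w1 w2 : ℤ} (hw1 : w1 ∈ W) (hw2 : w2 ∈ W)
    (hsum : (AddMonoid.exponent G : ℤ) ∣ w1 + w2)
    {S : Multiset G} {g : G} (hgc : 2 ≤ S.count g) {m : ℕ}
    (h : HasDisjointWZeroSubsums W (S - (g ::ₘ {g})) m) :
    HasDisjointWZeroSubsums W S (m + 1) := by
  classical
  obtain ⟨ls, h1, h2, h3⟩ := h
  refine ⟨[(w1, g), (w2, g)] :: ls, by simp [h1], ?_, ?_⟩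
  · intro l hl
    rcases List.mem_cons.mp hl with rfl | hl
    · refine ⟨by simp, ?_, ?_⟩
      · rintro p hp
        rcases List.mem_cons.mp hp with rfl | hp
        · exact hw1
        · rcases List.mem_cons.mp hp with rfl | hp
          · exact hw2
          · simp at hp
      · simp only [List.map_cons, List.map_nil, List.sum_cons, List.sum_nil, add_zero]
        rw [← add_smul]
        exact dvd_zsmul_eq_zero hsum g
    · exact h2 l hl
  · rw [List.flatten_cons, List.map_append, ← Multiset.coe_add]
    have hpair : (↑([(w1, g), (w2, g)].map Prod.snd) : Multiset G) = g ::ₘ {g} := by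
      simp only [List.map_cons, List.map_nil]
      rfl
    rw [hpair]
    calc (g ::ₘ ({g} : Multiset G)) + ↑(ls.flatten.map Prod.snd)
        ≤ (g ::ₘ ({g} : Multiset G)) + (S - (g ::ₘ {g})) := add_le_add_right h3 _
      _ = S := add_tsub_cancel_of_le (pair_le hgc)

lemma pigeon [Fintype G] {S : Multiset G} (h : Fintype.card G < Multiset.card S) :
    ∃ g : G, 2 ≤ S.count g := by
  classical
  by_contra hc
  push_neg at hc
  have hnd : S.Nodup := Multiset.nodup_iff_count_le_one.mpr (fun a => by have := hc a; omega)
  have h1 : S.toFinset.card = Multiset.card S :=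
    Multiset.toFinset_card_eq_card_iff_nodup.mpr hnd
  have h2 : S.toFinset.card ≤ Fintype.card G := Finset.card_le_univ _
  omega

lemma existsN [Fintype G] {W : Set ℤ} {w1 w2 : ℤ} (hw1 : w1 ∈ W) (hw2 : w2 ∈ W)
    (hsum : (AddMonoid.exponent G : ℤ) ∣ w1 + w2) :
    ∀ (m : ℕ) (S : Multiset G), Fintype.card G + 2 * m ≤ Multiset.card S →
      HasDisjointWZeroSubsums W S m := by
  intro m
  induction m with
  | zero => intro S _; exact ⟨[], rfl, by simp, by simp⟩
  | succ m ih =>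
    intro S hS
    have hcard : Fintype.card G < Multiset.card S := by omega
    obtain ⟨g, hgc⟩ := pigeon hcard
    have hgg := pair_le hgc
    have hcard' : Fintype.card G + 2 * m ≤ Multiset.card (S - (g ::ₘ {g})) := by
      rw [Multiset.card_sub hgg]
      simp only [Multiset.card_cons, Multiset.card_singleton]
      omega
    exact extract hw1 hw2 hsum hgc (ih _ hcard')

lemma flatten_len {α : Type*} (ls : List (List α)) (h : ∀ l ∈ ls, l ≠ []) :
    ls.length ≤ ls.flatten.length := by
  induction ls with
  | nil => simp
  | cons hd tl ih =>
    simp only [List.length_cons, List.flatten_cons, List.length_append]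
    have h1 : 0 < hd.length := List.length_pos_iff.mpr (h hd List.mem_cons_self)
    have h2 := ih (fun l hl => h l (List.mem_cons_of_mem _ hl))
    omega

lemma lb {W : Set ℤ} {m n : ℕ}
    (hn : ∀ S : Multiset G, n ≤ Multiset.card S → HasDisjointWZeroSubsums W S m) :
    m ≤ n := by
  by_contra h
  push_neg at h
  obtain ⟨ls, h1, h2, h3⟩ := hn (Multiset.replicate n (0 : G)) (by simp)
  have hlen := flatten_len ls (fun l hl => (h2 l hl).1)
  have hcard := Multiset.card_le_card h3
  simp only [Multiset.coe_card, List.length_map, Multiset.card_replicate] at hcard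
  omega

end Stmt11Aux

/-- if `W` is multiplicatively closed modulo `exp(G)` and `e_W(G) = 2`,
then `D_{W,m+1}(G) = D_{W,m}(G) + 2` for every `m ≥ |G|`. -/
theorem stmt11 {G : Type*} [AddCommGroup G] [Fintype G] (W : Set ℤ) (hW : W.Nonempty)
    (hmul : MulClosedMod W (AddMonoid.exponent G)) (he : eW W G = 2) :
    ∀ m : ℕ, Fintype.card G ≤ m → DW W G (m + 1) = DW W G m + 2 := by
  intro m hm
  classical
  set E2 : Set ℕ := {t : ℕ | 1 ≤ t ∧ ∃ w : Fin t → ℤ, (∀ i, w i ∈ W) ∧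
      ((AddMonoid.exponent G : ℤ) ∣ ∑ i, w i)} with hE2def
  have heW : sInf E2 = 2 := he
  have hene : E2.Nonempty := by
    by_contra hc
    rw [Set.not_nonempty_iff_eq_empty] at hc
    rw [hc, Nat.sInf_empty] at heW
    omega
  have h2mem : 2 ∈ E2 := heW ▸ Nat.sInf_mem hene
  rw [hE2def] at h2mem
  obtain ⟨-, wf, hwfW, hwfd⟩ := h2mem
  have hw1 : wf 0 ∈ W := hwfW 0
  have hw2 : wf 1 ∈ W := hwfW 1
  have hsum : (AddMonoid.exponent G : ℤ) ∣ wf 0 + wf 1 := by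
    simpa [Fin.sum_univ_two] using hwfd
  have hno : ∀ w ∈ W, ¬ (AddMonoid.exponent G : ℤ) ∣ w := by
    intro w hw hd
    have h1mem : 1 ∈ E2 := by
      rw [hE2def]
      exact ⟨le_refl 1, fun _ => w, fun _ => hw, by simpa [Fin.sum_univ_one] using hd⟩
    have := Nat.sInf_le h1mem
    omega
  clear heW hene hwfd hwfW
  obtain ⟨g, hg⟩ := AddMonoid.exists_addOrderOf_eq_exponent
    (AddMonoid.ExponentExists.of_finite (G := G))
  have hGpos : 0 < Fintype.card G := Fintype.card_pos
  -- the defining sets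
  set Pm : Set ℕ := {n : ℕ | ∀ S : Multiset G,
      n ≤ Multiset.card S → HasDisjointWZeroSubsums W S m} with hPmdef
  set Pm1 : Set ℕ := {n : ℕ | ∀ S : Multiset G,
      n ≤ Multiset.card S → HasDisjointWZeroSubsums W S (m + 1)} with hPm1def
  have hDWm : DW W G m = sInf Pm := rfl
  have hDWm1 : DW W G (m + 1) = sInf Pm1 := rfl
  have hPne : Pm.Nonempty :=
    ⟨Fintype.card G + 2 * m, fun S hS => Stmt11Aux.existsN hw1 hw2 hsum m S hS⟩
  have hDmem : DW W G m ∈ Pm := by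
    rw [hDWm]; exact Nat.sInf_mem hPne
  have hDge : m ≤ DW W G m := Stmt11Aux.lb hDmem
  -- upper bound
  have hup_mem : (DW W G m + 2) ∈ Pm1 := by
    intro S hS
    have hcard : Fintype.card G < Multiset.card S := by omega
    obtain ⟨g0, hg0⟩ := Stmt11Aux.pigeon hcard
    apply Stmt11Aux.extract hw1 hw2 hsum hg0
    apply hDmem
    rw [Multiset.card_sub (Stmt11Aux.pair_le hg0)]
    simp only [Multiset.card_cons, Multiset.card_singleton]
    omega
  have hub : DW W G (m + 1) ≤ DW W G m + 2 := by
    rw [hDWm1]; exact Nat.sInf_le hup_mem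
  -- lower bound
  have hT0 : ∃ T0 : Multiset G, DW W G m - 1 ≤ Multiset.card T0 ∧
      ¬ HasDisjointWZeroSubsums W T0 m := by
    by_contra hc
    push_neg at hc
    have hmem : DW W G m - 1 ∈ Pm := fun S hS => hc S hS
    have := hDWm ▸ Nat.sInf_le hmem
    omega
  obtain ⟨T0, hT0c, hT0n⟩ := hT0
  set T : Multiset G := (↑(T0.toList.take (DW W G m - 1)) : Multiset G) with hTdef
  have hTle : T ≤ T0 := by
    calc T ≤ (↑T0.toList : Multiset G) :=
          Multiset.coe_le.mpr (List.take_sublist _ _).subperm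
      _ = T0 := Multiset.coe_toList T0
  have hTcard : Multiset.card T = DW W G m - 1 := by
    rw [hTdef]
    rw [Multiset.coe_card, List.length_take, Multiset.length_toList]
    omega
  have hTn : ¬ HasDisjointWZeroSubsums W T m := fun h => hT0n (Stmt11Aux.mono h hTle)
  have hkey := Stmt11Aux.key hmul hw1 hw2 hsum hno hg hTn
  have hlow : DW W G m + 2 ≤ DW W G (m + 1) := by
    rw [hDWm1]
    apply le_csInf ⟨_, hup_mem⟩
    intro n hn
    by_contra hlt
    push_neg at hlt
    apply hkey
    apply hn
    simp only [Multiset.card_cons, hTcard]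
    omega
  exact le_antisymm hub hlow
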